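/- Let B̃ = [[0, D-I],[-I, A]] be the 2n×2n reduced non-backtracking matrix of a graph, and suppose [x; y] is an eigenvector of B̃ with eigenvalue λ and ‖y‖ = 1. Set α = ⟨y, Ay⟩ and β = ⟨y, (D-I)y⟩ (both real if y is real, but for complex y take the sesquilinear forms, which are real since A and D-I are real symmetric). Then λ² - αλ + β = 0. Consequently, if λ is not real, then |λ|² = β = |λ|·|⟨x, y⟩|, i.e., |⟨x, y⟩| = |λ|. -/

import Mathlib

open scoped Matrix

lemma herm_form_self_star {n : ℕ} (M : Matrix (Fin n) (Fin n) ℂ) (hM : M.IsHermitian)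
    (v : Fin n → ℂ) : star (star v ⬝ᵥ M.mulVec v) = star v ⬝ᵥ M.mulVec v := by
  calc star (star v ⬝ᵥ M.mulVec v) = star (M.mulVec v) ⬝ᵥ v := by
        rw [Matrix.star_dotProduct]; simp
    _ = (star v ᵥ* Mᴴ) ⬝ᵥ v := by rw [Matrix.star_mulVec]
    _ = star v ⬝ᵥ M.mulVec v := by rw [← Matrix.dotProduct_mulVec, hM.eq]

/-- If `[x; y]` is an eigenvector of the reduced non-backtracking matrix with eigenvalue
`λ` and `‖y‖ = 1`, then with `α = ⟨y, Ay⟩` and `β = ⟨y, (D-I)y⟩` one has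
`λ² - αλ + β = 0`; consequently, if `λ` is not real then `|λ|² = β = |λ||⟨x,y⟩|`,
i.e. `|⟨x,y⟩| = |λ|`. -/
theorem nonreal_eigenvalue_inner_product (n : ℕ) (A D : Matrix (Fin n) (Fin n) ℂ)
    (hA : A.IsHermitian) (hD : (D - 1).IsHermitian)
    (x y : Fin n → ℂ) (lam : ℂ)
    (h1 : (D - 1).mulVec y = lam • x)
    (h2 : -x + A.mulVec y = lam • y)
    (hy : star y ⬝ᵥ y = 1)
    (α β : ℂ)
    (hα : α = star y ⬝ᵥ A.mulVec y)
    (hβ : β = star y ⬝ᵥ (D - 1).mulVec y) :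
    lam ^ 2 - α * lam + β = 0 ∧
      (lam.im ≠ 0 →
        ‖lam‖ ^ 2 = β.re ∧
        β.re = ‖lam‖ * ‖star x ⬝ᵥ y‖ ∧
        ‖star x ⬝ᵥ y‖ = ‖lam‖) := by
  set c := star y ⬝ᵥ x with hc
  have hAy : A.mulVec y = lam • y + x := by rw [← h2]; abel
  have hα2 : α = lam + c := by
    rw [hα, hAy, dotProduct_add, dotProduct_smul, hy, smul_eq_mul, mul_one]
  have hβ2 : β = lam * c := by
    rw [hβ, h1, dotProduct_smul, smul_eq_mul]
  have hαs : star α = α := hα ▸ herm_form_self_star A hA y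
  have hβs : star β = β := hβ ▸ herm_form_self_star (D - 1) hD y
  refine ⟨by rw [hα2, hβ2]; ring, fun him => ?_⟩
  have hlne : (starRingEnd ℂ) lam - lam ≠ 0 := by
    intro h
    apply him
    have := congrArg Complex.im h
    simp [Complex.conj_im] at this
    linarith
  have hcl : c = (starRingEnd ℂ) lam := by
    have e1 : (starRingEnd ℂ) lam + (starRingEnd ℂ) c = lam + c := by
      rw [hα2] at hαs; simpa [map_add] using hαs
    have e2 : (starRingEnd ℂ) lam * (starRingEnd ℂ) c = lam * c := by
      rw [hβ2] at hβs; simpa [map_mul] using hβs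
    have econj : (starRingEnd ℂ) c = lam + c - (starRingEnd ℂ) lam := by
      linear_combination e1
    rw [econj] at e2
    have : c * ((starRingEnd ℂ) lam - lam) = (starRingEnd ℂ) lam * ((starRingEnd ℂ) lam - lam) := by
      linear_combination e2
    exact mul_right_cancel₀ hlne this
  have hβval : β = lam * (starRingEnd ℂ) lam := by rw [hβ2, hcl]
  have hβre : β.re = ‖lam‖ ^ 2 := by
    rw [hβval, Complex.mul_conj]
    simp [Complex.sq_norm]
  have hxy : star x ⬝ᵥ y = lam := by
    have : star x ⬝ᵥ y = star (star y ⬝ᵥ x) := by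
      rw [Matrix.star_dotProduct]
    rw [this, ← hc, hcl]
    simp
  refine ⟨hβre.symm, ?_, ?_⟩
  · rw [hβre, hxy]; ring
  · rw [hxy]
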